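/- Let λ ∈ ℝ^{n+1} lie in the open cone Γ_k^+ (σ_1(λ) > 0, …, σ_k(λ) > 0) for 1 ≤ k ≤ n, and suppose ((n+1−k)/(n+1))·σ_k(λ)·σ_1(λ) − (k+1)·σ_{k+1}(λ) = 0. Then all components of λ are equal: λ_1 = λ_2 = ⋯ = λ_{n+1}. -/

import Mathlib

open Finset Polynomial

/-- The k-th elementary symmetric polynomial of `x ∈ ℝ^m`. -/
def esym {m : ℕ} (k : ℕ) (x : Fin m → ℝ) : ℝ :=
  ∑ s ∈ Finset.univ.powersetCard k, ∏ i ∈ s, x i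

lemma esym_eq_esymm {m : ℕ} (k : ℕ) (x : Fin m → ℝ) :
    esym k x = (Finset.univ.val.map x).esymm k := by
  rw [Finset.esymm_map_val]; rfl

lemma esym_zero {m : ℕ} (x : Fin m → ℝ) : esym 0 x = 1 := by
  simp [esym]

lemma esym_one {m : ℕ} (x : Fin m → ℝ) : esym 1 x = ∑ i, x i := by
  simp [esym, Finset.powersetCard_one, Finset.sum_map]

lemma esym_top {m : ℕ} (x : Fin m → ℝ) : esym m x = ∏ i, x i := by
  rw [esym]
  have : Finset.univ.powersetCard m = ({Finset.univ} : Finset (Finset (Fin m))) := by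
    have := Finset.powersetCard_self (Finset.univ : Finset (Fin m))
    simpa using this
  rw [this]
  simp

lemma esymm_cons (a : ℝ) (s : Multiset ℝ) (k : ℕ) :
    (a ::ₘ s).esymm (k+1) = a * s.esymm k + s.esymm (k+1) := by
  rw [Multiset.esymm, Multiset.powersetCard_cons, Multiset.map_add, Multiset.sum_add,
    Multiset.map_map, Multiset.esymm, Multiset.esymm, ← Multiset.sum_map_mul_left]
  rw [add_comm]
  congr 1
  congr 1
  apply Multiset.map_congr rfl
  intro t _
  simp [Multiset.prod_cons]

lemma esymm_one (s : Multiset ℝ) : s.esymm 1 = s.sum := by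
  simp [Multiset.esymm, Multiset.powersetCard_one, Multiset.map_map]

lemma sq_sum_identity_multiset (s : Multiset ℝ) :
    s.sum ^ 2 = (s.map (fun t => t^2)).sum + 2 * s.esymm 2 := by
  induction s using Multiset.induction with
  | empty => simp [Multiset.esymm, Multiset.powersetCard_zero_right]
  | cons a s ih =>
    rw [Multiset.sum_cons, Multiset.map_cons, Multiset.sum_cons]
    have h2 : (a ::ₘ s).esymm 2 = a * s.esymm 1 + s.esymm 2 := esymm_cons a s 1
    rw [h2, esymm_one]
    ring_nf
    ring_nf at ih
    nlinarith [ih]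

lemma sq_sum_identity {m : ℕ} (y : Fin m → ℝ) :
    (∑ i, y i) ^ 2 = (∑ i, (y i)^2) + 2 * esym 2 y := by
  have h := sq_sum_identity_multiset (Finset.univ.val.map y)
  rw [esym_eq_esymm]
  simpa [Multiset.map_map, Finset.sum, Function.comp_def] using h

lemma cs_ineq {m : ℕ} (y : Fin m → ℝ) :
    2 * (m:ℝ) * esym 2 y ≤ ((m:ℝ) - 1) * (∑ i, y i) ^ 2 := by
  have hcs : (∑ i, y i) ^ 2 ≤ (m:ℝ) * ∑ i, (y i)^2 := by
    have := sq_sum_le_card_mul_sum_sq (s := (Finset.univ : Finset (Fin m))) (f := y)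
    simpa using this
  have hid := sq_sum_identity y
  nlinarith [hid, hcs]

lemma cs_eq {m : ℕ} (y : Fin m → ℝ)
    (h : ((m:ℝ) - 1) * (∑ i, y i) ^ 2 = 2 * (m:ℝ) * esym 2 y) :
    ∀ i j, y i = y j := by
  have hid := sq_sum_identity y
  -- deduce m * ∑ y² = (∑ y)²
  have key : (m:ℝ) * (∑ i, (y i)^2) = (∑ i, y i)^2 := by nlinarith [hid, h]
  have e1 : ∀ i : Fin m, ∑ j, (y i - y j)^2
      = (m:ℝ) * y i^2 + (∑ j, (y j)^2) - 2 * (y i * ∑ j, y j) := by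
    intro i
    have hexp : ∀ j : Fin m, (y i - y j)^2 = y i^2 + (y j)^2 - 2*(y i * y j) := fun j => by ring
    simp only [hexp, Finset.sum_sub_distrib, Finset.sum_add_distrib, Finset.sum_const,
      Finset.card_univ, Fintype.card_fin, nsmul_eq_mul, ← Finset.mul_sum]
  have hvar : ∑ i, ∑ j, (y i - y j)^2 = 0 := by
    rw [Finset.sum_congr rfl (fun i _ => e1 i)]
    rw [Finset.sum_sub_distrib, Finset.sum_add_distrib, Finset.sum_const, ← Finset.mul_sum,
      Finset.card_univ, Fintype.card_fin, nsmul_eq_mul, ← Finset.mul_sum, ← Finset.sum_mul]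
    nlinarith [key]
  intro i j
  have hnn : ∀ p ∈ (Finset.univ : Finset (Fin m)), (0:ℝ) ≤ ∑ j, (y p - y j)^2 :=
    fun p _ => Finset.sum_nonneg fun j _ => sq_nonneg _
  have h1 : ∀ p ∈ (Finset.univ : Finset (Fin m)), (∑ j, (y p - y j)^2) = 0 :=
    (Finset.sum_eq_zero_iff_of_nonneg hnn).1 hvar
  have h2 := (Finset.sum_eq_zero_iff_of_nonneg (fun q _ => sq_nonneg (y i - y q))).1
    (h1 i (Finset.mem_univ i)) j (Finset.mem_univ j)
  have := sq_eq_zero_iff.1 h2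
  linarith [this]

noncomputable def pn {m : ℕ} (i : ℕ) (x : Fin m → ℝ) : ℝ := esym i x / (m.choose i)

lemma esym_compl {m : ℕ} (k : ℕ) (hk : k ≤ m) (x : Fin m → ℝ) :
    esym (m - k) x = ∑ s ∈ Finset.univ.powersetCard k, ∏ i ∈ sᶜ, x i := by
  rw [esym]
  refine Finset.sum_nbij' (fun s => sᶜ) (fun s => sᶜ) ?_ ?_ ?_ ?_ ?_
  · intro s hs
    rw [Finset.mem_powersetCard] at hs ⊢
    refine ⟨Finset.subset_univ _, ?_⟩
    rw [Finset.card_compl, hs.2]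
    simp
    omega
  · intro s hs
    rw [Finset.mem_powersetCard] at hs ⊢
    refine ⟨Finset.subset_univ _, ?_⟩
    rw [Finset.card_compl, hs.2]
    simp
  · intro s _; simp
  · intro s _; simp
  · intro s _; simp

lemma prod_pair_b {m : ℕ} (x : Fin m → ℝ) (t : Finset (Fin m)) (ht : t.card = 2) :
    ∏ j ∈ t, (∏ l ∈ Finset.univ.erase j, x l) = (∏ l, x l) * ∏ l ∈ tᶜ, x l := by
  obtain ⟨a, c, hac, rfl⟩ := Finset.card_eq_two.1 ht
  rw [Finset.prod_pair hac]
  have hcompl : ({a, c} : Finset (Fin m))ᶜ = (Finset.univ.erase a).erase c := by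
    rw [Finset.compl_insert, Finset.compl_singleton, Finset.erase_right_comm]
  rw [hcompl]
  have h1 : ∏ l, x l = x a * ∏ l ∈ Finset.univ.erase a, x l :=
    (Finset.mul_prod_erase Finset.univ x (Finset.mem_univ a)).symm
  have h2 : ∏ l ∈ Finset.univ.erase a, x l = x c * ∏ l ∈ (Finset.univ.erase a).erase c, x l :=
    (Finset.mul_prod_erase _ x (by simp [Finset.mem_erase, Ne.symm hac])).symm
  have h3 : ∏ l ∈ Finset.univ.erase c, x l = x a * ∏ l ∈ (Finset.univ.erase c).erase a, x l :=
    (Finset.mul_prod_erase _ x (by simp [Finset.mem_erase, hac])).symm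
  rw [h1, h2, h3, Finset.erase_right_comm]
  ring

lemma newton_top {i : ℕ} (x : Fin (i+2) → ℝ) :
    pn i x * pn (i+2) x ≤ (pn (i+1) x)^2 := by
  set b : Fin (i+2) → ℝ := fun j => ∏ l ∈ Finset.univ.erase j, x l with hb
  -- esym (i+1) x = ∑ j, b j
  have hA : esym (i+1) x = ∑ j, b j := by
    have h := esym_compl (m := i+2) 1 (by omega) x
    rw [show i + 2 - 1 = i + 1 from rfl] at h
    rw [h, Finset.powersetCard_one, Finset.sum_map]
    refine Finset.sum_congr rfl fun j _ => ?_
    simp [hb, Finset.compl_singleton]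
  -- esym i x * esym (i+2) x = esym 2 b
  have hB : esym (i+2) x * esym i x = esym 2 b := by
    have h := esym_compl (m := i+2) 2 (by omega) x
    rw [show i + 2 - 2 = i from rfl] at h
    rw [h, esym_top, esym, Finset.mul_sum]
    refine Finset.sum_congr rfl fun t ht => ?_
    rw [Finset.mem_powersetCard] at ht
    exact (prod_pair_b x t ht.2).symm
  -- Cauchy-Schwarz for b
  have hCS : 2 * ((i:ℝ)+2) * esym 2 b ≤ (((i:ℝ)+2) - 1) * (∑ j, b j) ^ 2 := by
    have := cs_ineq b
    push_cast at this ⊢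
    convert this using 2 <;> push_cast <;> ring
  rw [← hB, ← hA] at hCS
  -- choose arithmetic
  have hc0 : (i+2).choose (i+2) = 1 := Nat.choose_self _
  have hc1 : (i+2).choose (i+1) = i+2 := Nat.choose_succ_self_right _
  have hc2 : (i+2).choose i * 2 = (i+2) * (i+1) := by
    have h := Nat.add_one_mul_choose_eq (i+1) 1
    simp [Nat.choose_one_right] at h
    rw [show i+1+1 = i+2 from rfl] at h
    have hsym : (i+2).choose i = (i+2).choose 2 := by
      have := Nat.choose_symm (n := i+2) (k := 2) (by omega)
      rwa [show i + 2 - 2 = i from rfl] at this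
    omega
  have hCipos : (0:ℝ) < ((i+2).choose i : ℝ) := by
    exact_mod_cast Nat.choose_pos (by omega)
  have hCi1pos : (0:ℝ) < ((i+2).choose (i+1) : ℝ) := by
    exact_mod_cast Nat.choose_pos (by omega)
  have hCi2pos : (0:ℝ) < ((i+2).choose (i+2) : ℝ) := by
    exact_mod_cast Nat.choose_pos (by omega)
  rw [pn, pn, pn, div_mul_div_comm, div_pow, div_le_div_iff₀ (by positivity) (by positivity)]
  have hden : 2 * ((i:ℝ)+2) * (((i+2).choose i : ℝ) * ((i+2).choose (i+2) : ℝ))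
      = (((i:ℝ)+2) - 1) * ((i+2).choose (i+1) : ℝ)^2 := by
    rw [hc0, hc1]
    have : ((i+2).choose i : ℝ) * 2 = ((i:ℝ)+2) * ((i:ℝ)+1) := by exact_mod_cast hc2
    push_cast
    nlinarith [this]
  nlinarith [hCS, hden, sq_nonneg (esym (i+1) x), mul_le_mul_of_nonneg_right hCS
    (le_of_lt (mul_pos hCipos hCi2pos))]

lemma deriv_step {m : ℕ} (x : Fin (m+1) → ℝ) :
    ∃ y : Fin m → ℝ, ∀ i ≤ m, pn i y = pn i x := by
  classical
  set P : Polynomial ℝ := ∏ j : Fin (m+1), (Polynomial.X - Polynomial.C (x j)) with hP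
  have hPmonic : P.Monic := monic_prod_of_monic _ _ (fun j _ => monic_X_sub_C (x j))
  have hPdeg : P.natDegree = m + 1 := by
    rw [hP, natDegree_prod _ _ (fun j _ => X_sub_C_ne_zero (x j))]
    simp
  have hProots : P.roots = Finset.univ.val.map x := by
    rw [hP, ← Polynomial.roots_multiset_prod_X_sub_C (Finset.univ.val.map x)]
    congr 1
    rw [Finset.prod, Multiset.map_map]
    rfl
  have hProotcard : Multiset.card P.roots = m + 1 := by
    rw [hProots]; simp
  set Q := Polynomial.derivative P with hQ
  have hQdeg : Q.natDegree ≤ m := by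
    have := Polynomial.natDegree_derivative_le P
    rw [← hQ] at this
    omega
  have hQcard_ge : m ≤ Multiset.card Q.roots := by
    have := Polynomial.card_roots_le_derivative P
    rw [← hQ] at this
    omega
  have hQcard_le : Multiset.card Q.roots ≤ Q.natDegree := Polynomial.card_roots' Q
  have hQnatdeg : Q.natDegree = m := le_antisymm hQdeg (le_trans hQcard_ge hQcard_le)
  have hQcard : Multiset.card Q.roots = m := le_antisymm (hQnatdeg ▸ hQcard_le) hQcard_ge
  have hQlead : Q.leadingCoeff = (m + 1 : ℝ) := by
    rw [Polynomial.leadingCoeff, hQnatdeg, hQ, Polynomial.coeff_derivative, ← hPdeg,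
      ← Polynomial.leadingCoeff, hPmonic.leadingCoeff]
    push_cast [hPdeg]
    ring
  have hQfact := Polynomial.C_leadingCoeff_mul_prod_multiset_X_sub_C (p := Q) (by rw [hQcard, hQnatdeg])
  -- turn roots into a tuple
  set l := Q.roots.toList with hl
  have hllen : l.length = m := by rw [hl, Multiset.length_toList, hQcard]
  refine ⟨fun i => l.get (Fin.cast hllen.symm i), ?_⟩
  set y : Fin m → ℝ := fun i => l.get (Fin.cast hllen.symm i) with hy
  have hymap : Finset.univ.val.map y = Q.roots := by
    rw [Fin.univ_val_map]
    have : List.ofFn y = l := by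
      apply List.ext_getElem
      · simp [hllen]
      · intro idx h1 h2
        simp [hy, List.getElem_ofFn]
    rw [this, hl, Multiset.coe_toList]
  intro i hi
  -- coefficient computations
  have hcoeffP : P.coeff (m + 1 - i) = (-1)^i * esym i x := by
    rw [hP, show (∏ j : Fin (m+1), (Polynomial.X - Polynomial.C (x j)))
        = ((Finset.univ.val.map x).map (fun t => Polynomial.X - Polynomial.C t)).prod by
      rw [Finset.prod, Multiset.map_map]; rfl,
      Multiset.prod_X_sub_C_coeff _ (by simp)]
    have hcard : Multiset.card (Finset.univ.val.map x) = m + 1 := by simp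
    rw [hcard, show m + 1 - (m + 1 - i) = i by omega, esym_eq_esymm]
  have hcoeffQ1 : Q.coeff (m - i) = (m + 1 - i : ℝ) * ((-1)^i * esym i x) := by
    rw [hQ, Polynomial.coeff_derivative, show m - i + 1 = m + 1 - i by omega, hcoeffP]
    have : ((m - i : ℕ) : ℝ) + 1 = (m + 1 - i : ℝ) := by
      have : (i:ℝ) ≤ m := by exact_mod_cast hi
      push_cast [Nat.cast_sub hi]
      ring
    rw [this]
    ring
  have hcoeffQ2 : Q.coeff (m - i) = (m + 1 : ℝ) * ((-1)^i * esym i y) := by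
    conv_lhs => rw [← hQfact]
    rw [Polynomial.coeff_C_mul, Multiset.prod_X_sub_C_coeff _ (by rw [hQcard]; omega)]
    rw [hQcard, show m - (m - i) = i by omega, hQlead, esym_eq_esymm, hymap]
  -- conclude
  have hesym : (m + 1 - i : ℝ) * esym i x = (m + 1 : ℝ) * esym i y := by
    have h := hcoeffQ1.symm.trans hcoeffQ2
    have hpow : ((-1:ℝ))^i ≠ 0 := by
      apply pow_ne_zero; norm_num
    have h2 : ((-1:ℝ))^i * ((m + 1 - i : ℝ) * esym i x)
        = ((-1:ℝ))^i * ((m + 1 : ℝ) * esym i y) := by linear_combination h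
    exact mul_left_cancel₀ hpow h2
  -- choose identity : (m choose i) * (m+1) = ((m+1) choose i) * (m+1-i)
  have hchoose : (m.choose i) * (m+1) = ((m+1).choose i) * (m+1-i) := Nat.choose_mul_succ_eq m i
  have hCm : (0:ℝ) < (m.choose i : ℝ) := by exact_mod_cast Nat.choose_pos hi
  have hCm1 : (0:ℝ) < ((m+1).choose i : ℝ) := by exact_mod_cast Nat.choose_pos (by omega)
  rw [pn, pn, div_eq_div_iff (by positivity) (by positivity)]
  have hchooseR : (m.choose i : ℝ) * (m+1) = ((m+1).choose i : ℝ) * (m+1-i) := by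
    have h := congrArg (Nat.cast : ℕ → ℝ) hchoose
    push_cast [Nat.cast_sub (by omega : i ≤ m + 1)] at h
    linarith [h]
  -- esym i y * C(m+1,i) = esym i x * C(m,i)
  have key : ((m:ℝ)+1) * (esym i y * ((m+1).choose i : ℝ))
      = ((m:ℝ)+1) * (esym i x * (m.choose i : ℝ)) := by
    linear_combination (-(((m+1).choose i : ℝ))) * hesym + (-(esym i x)) * hchooseR
  exact mul_left_cancel₀ (by positivity) key

lemma newton_general {i : ℕ} : ∀ {d : ℕ} (x : Fin (i+2+d) → ℝ),
    pn i x * pn (i+2) x ≤ (pn (i+1) x)^2 := by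
  intro d
  induction d with
  | zero => exact fun x => newton_top x
  | succ d ih =>
    intro x
    obtain ⟨y, hy⟩ := deriv_step (m := i+2+d) x
    rw [← hy i (by omega), ← hy (i+1) (by omega), ← hy (i+2) (by omega)]
    exact ih y

lemma newton' {m i : ℕ} (h : i + 2 ≤ m) (x : Fin m → ℝ) :
    pn i x * pn (i+2) x ≤ (pn (i+1) x)^2 := by
  obtain ⟨d, rfl⟩ : ∃ d, m = i + 2 + d := ⟨m - (i+2), by omega⟩
  exact newton_general x

/-- For λ in the open cone Γ_k^+, equality in the Newton-type inequality
forces all components of λ to be equal. -/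
theorem newton_eq_open_cone (n k : ℕ) (hk : 1 ≤ k) (hkn : k ≤ n)
    (lam : Fin (n+1) → ℝ)
    (hcone : ∀ j, 1 ≤ j → j ≤ k → 0 < esym j lam)
    (heq : (((n : ℝ) + 1 - k) / ((n : ℝ) + 1)) * esym k lam * esym 1 lam
        - ((k : ℝ) + 1) * esym (k+1) lam = 0) :
    ∀ i j : Fin (n+1), lam i = lam j := by
  have hm0 : ((n:ℝ)+1) ≠ 0 := by positivity
  -- positivity of normalized symmetric functions
  have hppos : ∀ j, 1 ≤ j → j ≤ k → 0 < pn j lam := by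
    intro j h1 h2
    have hc : (0:ℝ) < ((n+1).choose j : ℝ) := by
      exact_mod_cast Nat.choose_pos (by omega)
    exact div_pos (hcone j h1 h2) hc
  have hp0 : pn 0 lam = 1 := by
    rw [pn, esym_zero]
    simp
  -- equality hypothesis in normalized form
  have heq' : (((n:ℝ)+1) - k) * (esym k lam * esym 1 lam)
      = ((n:ℝ)+1) * (((k:ℝ)+1) * esym (k+1) lam) := by
    have h2 : (((n : ℝ) + 1 - k) / ((n : ℝ) + 1)) * esym k lam * esym 1 lam
        = ((k : ℝ) + 1) * esym (k+1) lam := by linarith [heq]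
    rw [div_mul_eq_mul_div, div_mul_eq_mul_div, div_eq_iff hm0] at h2
    linear_combination h2
  have hcc : (((n+1).choose (k+1)) : ℝ) * ((k:ℝ)+1)
      = ((n+1).choose k : ℝ) * (((n:ℝ)+1) - k) := by
    have h := congrArg (Nat.cast : ℕ → ℝ) (Nat.choose_succ_right_eq (n+1) k)
    push_cast [Nat.cast_sub (by omega : k ≤ n + 1)] at h
    linarith [h]
  have hCk : (0:ℝ) < ((n+1).choose k : ℝ) := by exact_mod_cast Nat.choose_pos (by omega)
  have hCk1 : (0:ℝ) < ((n+1).choose (k+1) : ℝ) := by exact_mod_cast Nat.choose_pos (by omega)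
  have hC1 : ((n+1).choose 1 : ℝ) = (n:ℝ)+1 := by
    rw [Nat.choose_one_right]; push_cast; ring
  have hpk1 : pn (k+1) lam = pn k lam * pn 1 lam := by
    rw [pn, pn, pn, div_mul_div_comm, div_eq_div_iff hCk1.ne'
      (mul_pos hCk (by exact_mod_cast Nat.choose_pos (by omega : 1 ≤ n+1) : (0:ℝ) < ((n+1).choose 1 : ℝ))).ne']
    rw [hC1]
    have key : ((k:ℝ)+1) * (esym (k+1) lam * (((n+1).choose k : ℝ) * (((n:ℝ)+1)))
        ) = ((k:ℝ)+1) * (esym k lam * esym 1 lam * ((n+1).choose (k+1) : ℝ)) := by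
      linear_combination (-(((n+1).choose k : ℝ))) * heq'
        + (-(esym k lam * esym 1 lam)) * hcc
    exact mul_left_cancel₀ (by positivity) key
  -- Newton's inequality at level 2
  have h2le : pn 2 lam ≤ pn 1 lam ^ 2 := by
    have h := newton' (by omega : 0 + 2 ≤ n + 1) lam
    rw [show (0:ℕ)+2 = 2 from rfl, show (0:ℕ)+1 = 1 from rfl, hp0, one_mul] at h
    exact h
  -- equality must hold at level 2
  have h2eq : pn 2 lam = pn 1 lam ^ 2 := by
    by_contra hne
    have hlt : pn 2 lam < pn 1 lam ^ 2 := lt_of_le_of_ne h2le hne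
    have main : ∀ j, 1 ≤ j → j ≤ k → pn (j+1) lam < pn j lam * pn 1 lam := by
      intro j hj1
      induction j, hj1 using Nat.le_induction with
      | base => intro _; rw [sq] at hlt; exact hlt
      | succ j hj ih =>
        intro hjk
        have hind := ih (by omega)
        have hnewt := newton' (by omega : j + 2 ≤ n + 1) lam
        have hpj : 0 < pn j lam := hppos j (by omega) (by omega)
        have hpj1 : 0 < pn (j+1) lam := hppos (j+1) (by omega) (by omega)
        nlinarith [hnewt, mul_lt_mul_of_pos_left hind hpj1, hpj, hpj1]
    have hfin := main k hk le_rfl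
    rw [hpk1] at hfin
    exact lt_irrefl _ hfin
  -- convert to the Cauchy-Schwarz equality form
  have hc2 : ((n+1).choose 2 : ℝ) * 2 = (((n:ℝ)+1)) * ((n:ℝ)+1-1) := by
    have h := congrArg (Nat.cast : ℕ → ℝ) (Nat.add_one_mul_choose_eq n 1)
    push_cast [Nat.choose_one_right] at h
    linarith [h]
  have hC2 : (0:ℝ) < ((n+1).choose 2 : ℝ) := by exact_mod_cast Nat.choose_pos (by omega)
  have hkey : (((n:ℝ)+1) - 1) * (∑ i, lam i) ^ 2 = 2 * ((n:ℝ)+1) * esym 2 lam := by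
    rw [pn, pn, hC1] at h2eq
    rw [← esym_one lam]
    rw [div_pow, div_eq_div_iff hC2.ne' (by positivity : (((n:ℝ)+1))^2 ≠ 0)] at h2eq
    have h3 : ((n:ℝ)+1) * (((((n:ℝ)+1) - 1) * (esym 1 lam)^2))
        = ((n:ℝ)+1) * (2 * ((n:ℝ)+1) * esym 2 lam) := by
      linear_combination (-2) * h2eq + (-((esym 1 lam)^2)) * hc2
    have := mul_left_cancel₀ hm0 h3
    linarith [this]
  have hcseq := cs_eq lam (by push_cast; linarith [hkey])
  exact hcseq
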